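/- arXiv:0709.0291 — 2 statements merged into one kernel-verified Lean document; each statement's English description precedes it below -/
import Mathlib

section
/- For any finite simple graph Y and any edge e, the number of acyclic orientations satisfies α(Y) = α(Y−e) + α(Y/e), where Y−e is edge deletion and Y/e is edge contraction. -/
namespace AcycPaper

variable {V : Type*}

/-- `r` is an orientation of the graph `Y`: exactly one direction per edge. -/
def IsOrientation (Y : SimpleGraph V) (r : V → V → Prop) : Prop :=
  (∀ i j, Y.Adj i j ↔ (r i j ∨ r j i)) ∧ ∀ i j, r i j → ¬ r j i

/-- A relation is acyclic if it has no directed cycles. -/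
def IsAcyclicRel (r : V → V → Prop) : Prop := ∀ v, ¬ Relation.TransGen r v v

/-- The set of acyclic orientations of `Y`. -/
def Acyc (Y : SimpleGraph V) : Set (V → V → Prop) :=
  {r | IsOrientation Y r ∧ IsAcyclicRel r}

/-- `v` is a source: no edge points into `v`. -/
def IsSource (r : V → V → Prop) (v : V) : Prop := ∀ j, ¬ r j v

open Classical in
/-- Click (source-to-sink move) at `v`: reverse all edges incident to `v`. -/
def click (r : V → V → Prop) (v : V) : V → V → Prop :=
  fun i j => if v = i ∨ v = j then r j i else r i j

/-- One click step between acyclic orientations. -/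
def ClickStep (Y : SimpleGraph V) (r r' : V → V → Prop) : Prop :=
  r ∈ Acyc Y ∧ ∃ v, IsSource r v ∧ r' = click r v

/-- κ-equivalence: the equivalence relation generated by clicks. -/
def KEquiv (Y : SimpleGraph V) : (V → V → Prop) → (V → V → Prop) → Prop :=
  Relation.EqvGen (ClickStep Y)

/-- The set of κ-equivalence classes of acyclic orientations. -/
def KQuot (Y : SimpleGraph V) := Quot (fun a b : Acyc Y => ClickStep Y a.1 b.1)

/-- κ(Y): number of κ-equivalence classes. -/
noncomputable def kappa (Y : SimpleGraph V) : ℕ := Nat.card (KQuot Y)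

/-- α(Y): number of acyclic orientations. -/
noncomputable def alpha (Y : SimpleGraph V) : ℕ := Nat.card (Acyc Y)


/-- The simple graph obtained from Y by contracting the edge {v,w}: the vertex w
becomes isolated and its former neighbours are attached to v instead. -/
def contractG (Y : SimpleGraph V) (v w : V) : SimpleGraph V where
  Adj a b := a ≠ w ∧ b ≠ w ∧ a ≠ b ∧
    ((Y.deleteEdges {s(v, w)}).Adj a b ∨ (a = v ∧ Y.Adj w b) ∨ (b = v ∧ Y.Adj a w))
  symm := by
    constructor
    rintro a b ⟨h1, h2, h3, h4⟩
    refine ⟨h2, h1, h3.symm, ?_⟩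
    rcases h4 with h | ⟨rfl, h⟩ | ⟨rfl, h⟩
    · exact Or.inl h.symm
    · exact Or.inr (Or.inr ⟨rfl, h.symm⟩)
    · exact Or.inr (Or.inl ⟨rfl, h.symm⟩)
  loopless := by constructor; rintro a ⟨_, _, h, _⟩; exact h rfl

/-- The orientation induced on the deleted graph Y − e (restriction). -/
def delRel (r : V → V → Prop) (v w : V) : V → V → Prop :=
  fun i j => r i j ∧ ¬((i = v ∧ j = w) ∨ (i = w ∧ j = v))

open Classical in
/-- The orientation obtained from r by reversing the edge {v,w}. -/
def revEdge (r : V → V → Prop) (v w : V) : V → V → Prop :=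
  fun i j => if (i = v ∧ j = w) ∨ (i = w ∧ j = v) then r j i else r i j

/-- The orientation induced on the contracted graph Y/e. -/
def contractRel (r : V → V → Prop) (v w : V) : V → V → Prop :=
  fun a b => a ≠ w ∧ b ≠ w ∧ a ≠ b ∧
    (delRel r v w a b ∨ (a = v ∧ r w b) ∨ (b = v ∧ r a w))

section DC
variable {V : Type*} {Y : SimpleGraph V} {v w : V}

lemma orient_adj {r : V → V → Prop} (h : IsOrientation Y r) {i j : V} (hr : r i j) :
    Y.Adj i j := (h.1 i j).2 (Or.inl hr)

lemma acyc_mono {r s : V → V → Prop} (hsub : ∀ i j, r i j → s i j)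
    (hs : IsAcyclicRel s) : IsAcyclicRel r := fun x hx =>
  hs x (Relation.TransGen.mono hsub _ _ hx)

lemma del_adj {i j : V} :
    (Y.deleteEdges {s(v, w)}).Adj i j ↔
      Y.Adj i j ∧ ¬((i = v ∧ j = w) ∨ (i = w ∧ j = v)) := by
  rw [SimpleGraph.deleteEdges_adj, Set.mem_singleton_iff, Sym2.eq_iff]

lemma delRel_sub {r : V → V → Prop} {i j : V} (h : delRel r v w i j) : r i j := h.1

lemma isor_del {r : V → V → Prop} (h : IsOrientation Y r) :
    IsOrientation (Y.deleteEdges {s(v, w)}) (delRel r v w) := by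
  constructor
  · intro i j
    rw [del_adj, h.1]
    unfold delRel
    constructor
    · rintro ⟨hij | hji, hne⟩
      · exact Or.inl ⟨hij, hne⟩
      · exact Or.inr ⟨hji, by tauto⟩
    · rintro (⟨hij, hne⟩ | ⟨hji, hne⟩)
      · exact ⟨Or.inl hij, hne⟩
      · exact ⟨Or.inr hji, by tauto⟩
  · intro i j hij hji
    exact h.2 i j hij.1 hji.1

lemma mem_acyc_del {r : V → V → Prop} (h : r ∈ Acyc Y) :
    delRel r v w ∈ Acyc (Y.deleteEdges {s(v, w)}) :=
  ⟨isor_del h.1, acyc_mono (fun _ _ => delRel_sub) h.2⟩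

lemma isor_rev {r : V → V → Prop} (h : IsOrientation Y r) :
    IsOrientation Y (revEdge r v w) := by
  constructor
  · intro i j
    rw [h.1]
    unfold revEdge
    by_cases hp : (i = v ∧ j = w) ∨ (i = w ∧ j = v)
    · have hp' : (j = v ∧ i = w) ∨ (j = w ∧ i = v) := by tauto
      rw [if_pos hp, if_pos hp']; tauto
    · have hp' : ¬((j = v ∧ i = w) ∨ (j = w ∧ i = v)) := by tauto
      rw [if_neg hp, if_neg hp']
  · intro i j hij hji
    unfold revEdge at hij hji
    by_cases hp : (i = v ∧ j = w) ∨ (i = w ∧ j = v)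
    · have hp' : (j = v ∧ i = w) ∨ (j = w ∧ i = v) := by tauto
      rw [if_pos hp] at hij; rw [if_pos hp'] at hji
      exact h.2 j i hij hji
    · have hp' : ¬((j = v ∧ i = w) ∨ (j = w ∧ i = v)) := by tauto
      rw [if_neg hp] at hij; rw [if_neg hp'] at hji
      exact h.2 i j hij hji

lemma delRel_rev {r : V → V → Prop} :
    delRel (revEdge r v w) v w = delRel r v w := by
  funext i j
  unfold delRel revEdge
  by_cases hp : (i = v ∧ j = w) ∨ (i = w ∧ j = v) <;> simp [hp]

lemma rev_rev {r : V → V → Prop} : revEdge (revEdge r v w) v w = r := by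
  funext i j
  unfold revEdge
  by_cases hp : (i = v ∧ j = w) ∨ (i = w ∧ j = v)
  · have hp' : (j = v ∧ i = w) ∨ (j = w ∧ i = v) := by tauto
    simp [hp, hp']
  · simp [hp]

lemma rev_apply_vw {r : V → V → Prop} : revEdge r v w v w ↔ r w v := by
  unfold revEdge; simp

lemma rev_apply_wv {r : V → V → Prop} : revEdge r v w w v ↔ r v w := by
  unfold revEdge
  by_cases hvw : v = w <;> simp [hvw]

lemma rev_sub_of_ne {r : V → V → Prop} {i j : V}
    (hp : ¬((i = v ∧ j = w) ∨ (i = w ∧ j = v))) : revEdge r v w i j ↔ r i j := by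
  unfold revEdge; rw [if_neg hp]

lemma dir_of_adj {r : V → V → Prop} (h : IsOrientation Y r) (he : Y.Adj v w)
    (hn : ¬ r v w) : r w v := by
  rcases (h.1 v w).1 he with h1 | h1
  · exact absurd h1 hn
  · exact h1

lemma recover_del {r1 r2 : V → V → Prop} (h1 : IsOrientation Y r1)
    (h2 : IsOrientation Y r2) (hd : delRel r1 v w = delRel r2 v w)
    (hvw : r1 v w ↔ r2 v w) : r1 = r2 := by
  have key : ∀ r : V → V → Prop, IsOrientation Y r → ∀ i j,
      ¬((i = v ∧ j = w) ∨ (i = w ∧ j = v)) → (r i j ↔ delRel r v w i j) := by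
    intro r hr i j hp
    unfold delRel
    exact ⟨fun h => ⟨h, hp⟩, fun h => h.1⟩
  have hwv : r1 w v ↔ r2 w v := by
    constructor
    · intro h
      rcases (h2.1 w v).1 (orient_adj h1 h) with h' | h'
      · exact h'
      · exact absurd (hvw.2 h') (h1.2 w v h)
    · intro h
      rcases (h1.1 w v).1 (orient_adj h2 h) with h' | h'
      · exact h'
      · exact absurd (hvw.1 h') (h2.2 w v h)
  funext i j
  apply propext
  by_cases hp : (i = v ∧ j = w) ∨ (i = w ∧ j = v)
  · rcases hp with ⟨rfl, rfl⟩ | ⟨rfl, rfl⟩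
    · exact hvw
    · exact hwv
  · rw [key r1 h1 i j hp, key r2 h2 i j hp, hd]

end DC
section DC2
variable {V : Type*} {Y : SimpleGraph V} {v w : V}

/-- Add a single directed edge `a → b` to a relation. -/
def addE (ρ : V → V → Prop) (a b : V) : V → V → Prop :=
  fun i j => ρ i j ∨ (i = a ∧ j = b)

lemma rho_not_pair {ρ : V → V → Prop}
    (hρ : IsOrientation (Y.deleteEdges {s(v, w)}) ρ) {i j : V} (h : ρ i j) :
    ¬((i = v ∧ j = w) ∨ (i = w ∧ j = v)) :=
  ((del_adj (Y := Y)).1 (orient_adj hρ h)).2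

lemma isor_add {ρ : V → V → Prop} {a b : V} (he : Y.Adj v w)
    (hρ : IsOrientation (Y.deleteEdges {s(v, w)}) ρ)
    (hab : (a = v ∧ b = w) ∨ (a = w ∧ b = v)) :
    IsOrientation Y (addE ρ a b) := by
  have hvw : v ≠ w := he.ne
  constructor
  · intro i j
    constructor
    · intro hadj
      by_cases hp : (i = v ∧ j = w) ∨ (i = w ∧ j = v)
      · unfold addE
        rcases hab with ⟨rfl, rfl⟩ | ⟨rfl, rfl⟩ <;> tauto
      · have hD : (Y.deleteEdges {s(v, w)}).Adj i j := del_adj.2 ⟨hadj, hp⟩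
        rcases (hρ.1 i j).1 hD with h | h
        · exact Or.inl (Or.inl h)
        · exact Or.inr (Or.inl h)
    · rintro ((h | ⟨rfl, rfl⟩) | (h | ⟨rfl, rfl⟩))
      · exact ((del_adj (Y := Y)).1 (orient_adj hρ h)).1
      · rcases hab with ⟨rfl, rfl⟩ | ⟨rfl, rfl⟩
        exacts [he, he.symm]
      · exact (((del_adj (Y := Y)).1 (orient_adj hρ h)).1).symm
      · rcases hab with ⟨rfl, rfl⟩ | ⟨rfl, rfl⟩
        exacts [he.symm, he]
  · rintro i j (hij | ⟨rfl, rfl⟩) (hji | hp)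
    · exact hρ.2 i j hij hji
    · have := rho_not_pair hρ hij
      rcases hab with ⟨rfl, rfl⟩ | ⟨rfl, rfl⟩ <;> tauto
    · have := rho_not_pair hρ hji
      rcases hab with ⟨rfl, rfl⟩ | ⟨rfl, rfl⟩ <;> tauto
    · rcases hab with ⟨rfl, rfl⟩ | ⟨rfl, rfl⟩ <;> tauto

lemma transGen_add {ρ : V → V → Prop} {a b x y : V}
    (h : Relation.TransGen (addE ρ a b) x y) :
    Relation.TransGen ρ x y ∨
      (Relation.ReflTransGen ρ x a ∧ Relation.ReflTransGen ρ b y) := by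
  induction h with
  | single h1 =>
    rcases h1 with h1 | ⟨rfl, rfl⟩
    · exact Or.inl (Relation.TransGen.single h1)
    · exact Or.inr ⟨Relation.ReflTransGen.refl, Relation.ReflTransGen.refl⟩
  | tail h1 h2 ih =>
    rcases h2 with h2 | ⟨rfl, rfl⟩
    · rcases ih with ih | ⟨ih1, ih2⟩
      · exact Or.inl (ih.tail h2)
      · exact Or.inr ⟨ih1, ih2.tail h2⟩
    · rcases ih with ih | ⟨ih1, ih2⟩
      · exact Or.inr ⟨ih.to_reflTransGen, Relation.ReflTransGen.refl⟩
      · exact Or.inr ⟨ih1, Relation.ReflTransGen.refl⟩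

lemma acyc_add_of_not {ρ : V → V → Prop} {a b : V} (hρ : IsAcyclicRel ρ)
    (hne : a ≠ b) (h : ¬ IsAcyclicRel (addE ρ a b)) :
    IsAcyclicRel (addE ρ b a) := by
  have hba : Relation.ReflTransGen ρ b a := by
    unfold IsAcyclicRel at h
    push_neg at h
    obtain ⟨x, hx⟩ := h
    rcases transGen_add hx with hx | ⟨h1, h2⟩
    · exact absurd hx (hρ x)
    · exact h2.trans h1
  intro x hx
  rcases transGen_add hx with hx | ⟨h1, h2⟩
  · exact hρ x hx
  · -- x ⇒* b, a ⇒* x, so a ⇒* b, and b ⇒* a : cycle unless a = b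
    have hab : Relation.ReflTransGen ρ a b := h2.trans h1
    rcases hba.cases_head with h3 | ⟨c, hc1, hc2⟩
    · exact hne h3.symm
    · exact hρ b ((Relation.TransGen.head' hc1 hc2).trans_left hab)

lemma delRel_add {ρ : V → V → Prop} {a b : V}
    (hρ : IsOrientation (Y.deleteEdges {s(v, w)}) ρ)
    (hab : (a = v ∧ b = w) ∨ (a = w ∧ b = v)) :
    delRel (addE ρ a b) v w = ρ := by
  funext i j
  apply propext
  unfold delRel addE
  constructor
  · rintro ⟨h1 | ⟨rfl, rfl⟩, h2⟩
    · exact h1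
    · exact absurd hab h2
  · intro h
    exact ⟨Or.inl h, rho_not_pair hρ h⟩

lemma rev_add {ρ : V → V → Prop} (hvw : v ≠ w)
    (hρ : IsOrientation (Y.deleteEdges {s(v, w)}) ρ) :
    revEdge (addE ρ w v) v w = addE ρ v w := by
  funext i j
  apply propext
  unfold revEdge addE
  have h1 : ¬ ρ v w := fun h => rho_not_pair hρ h (Or.inl ⟨rfl, rfl⟩)
  have h2 : ¬ ρ w v := fun h => rho_not_pair hρ h (Or.inr ⟨rfl, rfl⟩)
  by_cases hp : (i = v ∧ j = w) ∨ (i = w ∧ j = v)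
  · rw [if_pos hp]
    rcases hp with ⟨rfl, rfl⟩ | ⟨rfl, rfl⟩
    · simp
    · simp only [h1, h2, false_or]
      constructor
      · rintro ⟨rfl, _⟩; exact absurd rfl hvw
      · rintro ⟨rfl, _⟩; exact absurd rfl hvw
  · rw [if_neg hp]
    constructor
    · rintro (h | ⟨rfl, rfl⟩)
      · exact Or.inl h
      · exact absurd (Or.inr ⟨rfl, rfl⟩) hp
    · rintro (h | ⟨rfl, rfl⟩)
      · exact Or.inl h
      · exact absurd (Or.inl ⟨rfl, rfl⟩) hp

end DC2
section DC3
variable {V : Type*} {Y : SimpleGraph V} {v w : V}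

open Classical in
/-- Substitute `w` by `v`. -/
noncomputable def subv (v w x : V) : V := if x = w then v else x

lemma subv_w : subv v w w = v := by simp [subv]
lemma subv_of_ne {x : V} (h : x ≠ w) : subv v w x = x := by simp [subv, h]

lemma contractG_adj {a b : V} :
    (contractG Y v w).Adj a b ↔ a ≠ w ∧ b ≠ w ∧ a ≠ b ∧
      ((Y.deleteEdges {s(v, w)}).Adj a b ∨ (a = v ∧ Y.Adj w b) ∨ (b = v ∧ Y.Adj a w)) :=
  Iff.rfl

/-- If `c` has no cycles, then neither does any relation whose steps are either the
single edge `a → b` (with `subv v w a = subv v w b`) or project to `c`-steps. -/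
lemma acyc_of_proj {c s : V → V → Prop} {a b : V} (hab : a ≠ b)
    (hs : subv v w a = subv v w b) (hc : IsAcyclicRel c)
    (hstep : ∀ i j, s i j → (i = a ∧ j = b) ∨ c (subv v w i) (subv v w j)) :
    IsAcyclicRel s := by
  have main : ∀ x y, Relation.TransGen s x y →
      Relation.TransGen c (subv v w x) (subv v w y) ∨ (x = a ∧ y = b) := by
    intro x y h
    induction h with
    | single h1 =>
      rcases hstep _ _ h1 with h1 | h1
      · exact Or.inr h1
      · exact Or.inl (Relation.TransGen.single h1)
    | tail h1 h2 ih =>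
      rcases hstep _ _ h2 with ⟨rfl, rfl⟩ | h2'
      · rcases ih with ih | ⟨rfl, rfl⟩
        · exact Or.inl (hs ▸ ih)
        · exact absurd rfl hab
      · rcases ih with ih | ⟨rfl, rfl⟩
        · exact Or.inl (ih.tail h2')
        · exact Or.inl (hs ▸ Relation.TransGen.single h2')
  intro x hx
  rcases main x x hx with h | ⟨rfl, h⟩
  · exact hc _ h
  · exact hab h

end DC3
section DC4
variable {V : Type*} {Y : SimpleGraph V} {v w : V}

/-- Expand an orientation of the contracted graph to an orientation of `Y`,
orienting the contracted edge as `w → v`. -/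
def liftC (Y : SimpleGraph V) (v w : V) (c : V → V → Prop) : V → V → Prop :=
  fun i j => (i = w ∧ j = v) ∨
    (Y.Adj i j ∧ ¬(i = v ∧ j = w) ∧ ¬(i = w ∧ j = v) ∧ c (subv v w i) (subv v w j))

lemma adj_sub (hvw : v ≠ w) {i j : V} (hadj : Y.Adj i j)
    (hp1 : ¬(i = v ∧ j = w)) (hp2 : ¬(i = w ∧ j = v)) :
    (contractG Y v w).Adj (subv v w i) (subv v w j) := by
  have hij : i ≠ j := hadj.ne
  rw [contractG_adj]
  by_cases hi : i = w
  · have hj1 : j ≠ v := fun h => hp2 ⟨hi, h⟩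
    have hj2 : j ≠ w := fun h => hij (hi.trans h.symm)
    rw [hi, subv_w, subv_of_ne hj2]
    exact ⟨hvw, hj2, fun h => hj1 h.symm, Or.inr (Or.inl ⟨rfl, hi ▸ hadj⟩)⟩
  · by_cases hj : j = w
    · have hi1 : i ≠ v := fun h => hp1 ⟨h, hj⟩
      rw [hj, subv_w, subv_of_ne hi]
      exact ⟨hi, hvw, hi1, Or.inr (Or.inr ⟨rfl, hj ▸ hadj⟩)⟩
    · rw [subv_of_ne hi, subv_of_ne hj]
      exact ⟨hi, hj, hij, Or.inl (del_adj.2 ⟨hadj, by tauto⟩)⟩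

lemma c_ne {c : V → V → Prop} (hc : IsOrientation (contractG Y v w) c)
    {a b : V} (h : c a b) : a ≠ w ∧ b ≠ w ∧ a ≠ b := by
  have := orient_adj hc h
  rw [contractG_adj] at this
  exact ⟨this.1, this.2.1, this.2.2.1⟩

lemma isor_lift {c : V → V → Prop} (he : Y.Adj v w)
    (hc : IsOrientation (contractG Y v w) c) :
    IsOrientation Y (liftC Y v w c) := by
  have hvw : v ≠ w := he.ne
  constructor
  · intro i j
    constructor
    · intro hadj
      by_cases hp2 : i = w ∧ j = v
      · exact Or.inl (Or.inl hp2)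
      · by_cases hp1 : i = v ∧ j = w
        · exact Or.inr (Or.inl ⟨hp1.2, hp1.1⟩)
        · rcases (hc.1 _ _).1 (adj_sub hvw hadj hp1 hp2) with h | h
          · exact Or.inl (Or.inr ⟨hadj, hp1, hp2, h⟩)
          · exact Or.inr (Or.inr ⟨hadj.symm, by tauto, by tauto, h⟩)
    · rintro ((⟨rfl, rfl⟩ | ⟨h, _⟩) | (⟨rfl, rfl⟩ | ⟨h, _⟩))
      · exact he.symm
      · exact h
      · exact he
      · exact h.symm
  · rintro i j (⟨rfl, rfl⟩ | ⟨hadj, hp1, hp2, hcc⟩) (⟨h1, h2⟩ | ⟨hadj', hp1', hp2', hcc'⟩)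
    · exact hvw h1
    · exact hp1' ⟨rfl, rfl⟩
    · exact hp1 ⟨h2, h1⟩
    · exact hc.2 _ _ hcc hcc'

lemma lift_step {c : V → V → Prop} {i j : V} (h : liftC Y v w c i j) :
    (i = w ∧ j = v) ∨ c (subv v w i) (subv v w j) := by
  rcases h with h | h
  · exact Or.inl h
  · exact Or.inr h.2.2.2

lemma acyc_lift {c : V → V → Prop} (hvw : v ≠ w) (hc : IsAcyclicRel c) :
    IsAcyclicRel (liftC Y v w c) := by
  refine acyc_of_proj (v := v) (w := w) (fun h => hvw h.symm) ?_ hc (fun i j => lift_step)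
  rw [subv_w, subv_of_ne hvw]

lemma lift_not_vw {c : V → V → Prop} (hvw : v ≠ w) : ¬ liftC Y v w c v w := by
  rintro (⟨rfl, _⟩ | ⟨_, h, _⟩)
  · exact hvw rfl
  · exact h ⟨rfl, rfl⟩

lemma lift_wv {c : V → V → Prop} : liftC Y v w c w v := Or.inl ⟨rfl, rfl⟩

lemma acyc_rev_lift {c : V → V → Prop} (hvw : v ≠ w) (hc : IsAcyclicRel c) :
    IsAcyclicRel (revEdge (liftC Y v w c) v w) := by
  refine acyc_of_proj (v := v) (w := w) hvw ?_ hc ?_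
  · rw [subv_w, subv_of_ne hvw]
  · intro i j h
    by_cases hp : (i = v ∧ j = w) ∨ (i = w ∧ j = v)
    · unfold revEdge at h
      rw [if_pos hp] at h
      rcases hp with ⟨rfl, rfl⟩ | ⟨rfl, rfl⟩
      · exact Or.inl ⟨rfl, rfl⟩
      · -- h : liftC Y v w c v w, impossible
        exact absurd h (lift_not_vw hvw)
    · rw [rev_sub_of_ne hp] at h
      rcases lift_step h with ⟨rfl, rfl⟩ | h'
      · exact absurd (Or.inr ⟨rfl, rfl⟩) hp
      · exact Or.inr h'

end DC4
section DC5
variable {V : Type*} {Y : SimpleGraph V} {v w : V}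

lemma contract_lift {c : V → V → Prop} (he : Y.Adj v w)
    (hc : IsOrientation (contractG Y v w) c) :
    contractRel (liftC Y v w c) v w = c := by
  have hvw : v ≠ w := he.ne
  funext a b
  apply propext
  unfold contractRel
  constructor
  · rintro ⟨ha, hb, hab, hd⟩
    rcases hd with ⟨hr, -⟩ | ⟨rfl, hr⟩ | ⟨rfl, hr⟩
    · rcases hr with ⟨haw, -⟩ | ⟨-, -, -, hcc⟩
      · exact absurd haw ha
      · rwa [subv_of_ne ha, subv_of_ne hb] at hcc
    · rcases hr with ⟨-, hbv⟩ | ⟨-, -, -, hcc⟩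
      · exact absurd hbv.symm hab
      · rwa [subv_w, subv_of_ne hb] at hcc
    · rcases hr with ⟨haw, -⟩ | ⟨-, -, -, hcc⟩
      · exact absurd haw ha
      · rwa [subv_of_ne ha, subv_w] at hcc
  · intro hcc
    have hCadj := orient_adj hc hcc
    rw [contractG_adj] at hCadj
    obtain ⟨ha, hb, hab, hdisj⟩ := hCadj
    refine ⟨ha, hb, hab, ?_⟩
    rcases hdisj with hD | ⟨rfl, hadj⟩ | ⟨rfl, hadj⟩
    · obtain ⟨hadj, hp⟩ := del_adj.1 hD
      refine Or.inl ⟨Or.inr ⟨hadj, fun h => hp (Or.inl h), fun h => hp (Or.inr h), ?_⟩, hp⟩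
      rwa [subv_of_ne ha, subv_of_ne hb]
    · refine Or.inr (Or.inl ⟨rfl, Or.inr ⟨hadj, fun h => hvw h.1.symm,
        fun h => hab h.2.symm, ?_⟩⟩)
      rwa [subv_w, subv_of_ne hb]
    · refine Or.inr (Or.inr ⟨rfl, Or.inr ⟨hadj, fun h => hab h.1,
        fun h => ha h.1, ?_⟩⟩)
      rwa [subv_of_ne ha, subv_w]

end DC5
section DC6
variable {V : Type*} {Y : SimpleGraph V} {v w : V} {r : V → V → Prop}

lemma delRel_sub_rev {i j : V} (h : delRel r v w i j) : revEdge r v w i j :=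
  (rev_sub_of_ne h.2).2 h.1

/-- r-cycle fact: no `v → a → w` path when `r w v`. -/
lemma K1 (hacyc : IsAcyclicRel r) (hdir : r w v) {a : V}
    (h1 : r v a) (h2 : r a w) : False :=
  hacyc v (((Relation.TransGen.single h1).tail h2).tail hdir)

/-- rev-cycle fact: no `w → a → v` path when `r w v` and `revEdge r` is acyclic. -/
lemma K2 (hvw : v ≠ w) (hdir : r w v) (hrev : IsAcyclicRel (revEdge r v w))
    {a : V} (hav : a ≠ v) (haw : a ≠ w) (h1 : r w a) (h2 : r a v) : False := by
  have s1 : revEdge r v w v w := rev_apply_vw.2 hdir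
  have s2 : revEdge r v w w a := (rev_sub_of_ne (by tauto)).2 h1
  have s3 : revEdge r v w a v := (rev_sub_of_ne (by tauto)).2 h2
  exact hrev v (((Relation.TransGen.single s1).tail s2).tail s3)

lemma no_path (he : Y.Adj v w) (hor : IsOrientation Y r) (hacyc : IsAcyclicRel r)
    (hdir : r w v) (hrev : IsAcyclicRel (revEdge r v w)) :
    ∀ s t, (s = v ∨ s = w) → (t = v ∨ t = w) →
      ¬ Relation.TransGen (delRel r v w) s t := by
  intro s t hs ht h
  have hr : Relation.TransGen r s t := Relation.TransGen.mono (r := delRel r v w) (p := r) (fun _ _ => delRel_sub) _ _ h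
  have hrev' : Relation.TransGen (revEdge r v w) s t :=
    Relation.TransGen.mono (r := delRel r v w) (p := revEdge r v w) (fun _ _ => delRel_sub_rev) _ _ h
  rcases hs with rfl | rfl <;> rcases ht with rfl | rfl
  · exact hacyc _ hr
  · exact hacyc _ (hr.tail hdir)
  · exact hrev _ (Relation.TransGen.head (rev_apply_vw.2 hdir) hrev')
  · exact hacyc _ hr

lemma isor_contract (he : Y.Adj v w) (hor : IsOrientation Y r)
    (hacyc : IsAcyclicRel r) (hdir : r w v)
    (hrev : IsAcyclicRel (revEdge r v w)) :
    IsOrientation (contractG Y v w) (contractRel r v w) := by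
  have hvw : v ≠ w := he.ne
  constructor
  · intro a b
    rw [contractG_adj]
    constructor
    · rintro ⟨ha, hb, hab, hdisj⟩
      rcases hdisj with hD | ⟨rfl, hadj⟩ | ⟨rfl, hadj⟩
      · obtain ⟨hadj, hp⟩ := del_adj.1 hD
        rcases (hor.1 a b).1 hadj with h | h
        · exact Or.inl ⟨ha, hb, hab, Or.inl ⟨h, hp⟩⟩
        · exact Or.inr ⟨hb, ha, hab.symm, Or.inl ⟨h, by tauto⟩⟩
      · rcases (hor.1 w b).1 hadj with h | h
        · exact Or.inl ⟨ha, hb, hab, Or.inr (Or.inl ⟨rfl, h⟩)⟩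
        · exact Or.inr ⟨hb, ha, hab.symm, Or.inr (Or.inr ⟨rfl, h⟩)⟩
      · rcases (hor.1 a w).1 hadj with h | h
        · exact Or.inl ⟨ha, hb, hab, Or.inr (Or.inr ⟨rfl, h⟩)⟩
        · exact Or.inr ⟨hb, ha, hab.symm, Or.inr (Or.inl ⟨rfl, h⟩)⟩
    · have key : ∀ x y, contractRel r v w x y → x ≠ w ∧ y ≠ w ∧ x ≠ y ∧
          ((Y.deleteEdges {s(v, w)}).Adj x y ∨ (x = v ∧ Y.Adj w y) ∨ (y = v ∧ Y.Adj x w)) := by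
        rintro x y ⟨hx, hy, hxy, hd⟩
        refine ⟨hx, hy, hxy, ?_⟩
        rcases hd with hD | ⟨rfl, h⟩ | ⟨rfl, h⟩
        · exact Or.inl (del_adj.2 ⟨orient_adj hor hD.1, hD.2⟩)
        · exact Or.inr (Or.inl ⟨rfl, orient_adj hor h⟩)
        · exact Or.inr (Or.inr ⟨rfl, orient_adj hor h⟩)
      rintro (h | h)
      · exact key a b h
      · obtain ⟨hx, hy, hxy, hd⟩ := key b a h
        refine ⟨hy, hx, hxy.symm, ?_⟩
        rcases hd with hD | ⟨h1, h2⟩ | ⟨h1, h2⟩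
        · exact Or.inl hD.symm
        · exact Or.inr (Or.inr ⟨h1, h2.symm⟩)
        · exact Or.inr (Or.inl ⟨h1, h2.symm⟩)
  · rintro a b ⟨ha, hb, hab, hd1⟩ ⟨hb', ha', hab', hd2⟩
    rcases hd1 with hD1 | ⟨ha1, h1⟩ | ⟨hb1, h1⟩ <;>
      rcases hd2 with hD2 | ⟨hb2, h2⟩ | ⟨ha2, h2⟩
    · exact hor.2 a b hD1.1 hD2.1
    · exact K2 hvw hdir hrev (fun h => hab (h.trans hb2.symm)) ha h2 (hb2 ▸ hD1.1)
    · exact K1 hacyc hdir (ha2 ▸ hD1.1) h2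
    · exact K2 hvw hdir hrev (fun h => hab (ha1.trans h.symm)) hb h1 (ha1 ▸ hD2.1)
    · exact hab (ha1.trans hb2.symm)
    · exact hor.2 w b h1 h2
    · exact K1 hacyc hdir (hb1 ▸ hD2.1) h1
    · exact hor.2 a w h1 h2
    · exact hab (ha2.trans hb1.symm)
end DC6
section DC6b
variable {V : Type*} {Y : SimpleGraph V} {v w : V} {r : V → V → Prop}

/-- membership in the contracted class of `x`: `{x}` in general, `{v, w}` for `v`. -/
def inCls (v w x x' : V) : Prop := x' = x ∨ (x = v ∧ x' = w)

lemma inCls_self {x : V} : inCls v w x x := Or.inl rfl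

lemma inCls_two {y y' y'' : V} (h1 : inCls v w y y') (h2 : inCls v w y y'')
    (hne : y' ≠ y'') : (y' = v ∨ y' = w) ∧ (y'' = v ∨ y'' = w) := by
  rcases h1 with rfl | ⟨rfl, rfl⟩ <;> rcases h2 with h2 | ⟨h2a, rfl⟩
  · exact absurd h2.symm hne
  · exact ⟨Or.inl h2a, Or.inr rfl⟩
  · exact ⟨Or.inr rfl, Or.inl h2⟩
  · exact absurd rfl hne

lemma acyc_contract (he : Y.Adj v w) (hor : IsOrientation Y r)
    (hacyc : IsAcyclicRel r) (hdir : r w v)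
    (hrev : IsAcyclicRel (revEdge r v w)) :
    IsAcyclicRel (contractRel r v w) := by
  have hvw : v ≠ w := he.ne
  set ρ := delRel r v w with hρdef
  have hρ : IsAcyclicRel ρ := acyc_mono (fun _ _ => delRel_sub) hacyc
  have hB := no_path he hor hacyc hdir hrev
  -- the projected relation
  set ρ' : V → V → Prop :=
    fun x y => ∃ x' y', inCls v w x x' ∧ inCls v w y y' ∧ ρ x' y' with hρ'def
  have hsub : ∀ a b, contractRel r v w a b → ρ' a b := by
    rintro a b ⟨ha, hb, hab, hd⟩
    rcases hd with hD | ⟨ha1, h1⟩ | ⟨hb1, h1⟩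
    · exact ⟨a, b, inCls_self, inCls_self, hD⟩
    · refine ⟨w, b, Or.inr ⟨ha1, rfl⟩, inCls_self, h1, ?_⟩
      rintro (⟨h, -⟩ | ⟨-, h⟩)
      · exact hvw h.symm
      · exact hab (ha1.trans h.symm)
    · refine ⟨a, w, inCls_self, Or.inr ⟨hb1, rfl⟩, h1, ?_⟩
      rintro (⟨h, -⟩ | ⟨h, -⟩)
      · exact hab (h.trans hb1.symm)
      · exact ha h
  have main : ∀ x y, Relation.TransGen ρ' x y →
      (∃ x' y', inCls v w x x' ∧ inCls v w y y' ∧ Relation.TransGen ρ x' y') ∨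
      ((∃ x' s, inCls v w x x' ∧ (s = v ∨ s = w) ∧ Relation.TransGen ρ x' s) ∧
       (∃ t y', (t = v ∨ t = w) ∧ inCls v w y y' ∧ Relation.ReflTransGen ρ t y')) := by
    intro x y h
    induction h with
    | single h1 =>
      obtain ⟨x', y', hx, hy, hst⟩ := h1
      exact Or.inl ⟨x', y', hx, hy, Relation.TransGen.single hst⟩
    | tail h1 h2 ih =>
      obtain ⟨y'', z', hy'', hz', hstep⟩ := h2
      rcases ih with ⟨x', y', hx, hy, ht⟩ | ⟨hfirst, t, y', htv, hy, hrt⟩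
      · by_cases hyy : y' = y''
        · exact Or.inl ⟨x', z', hx, hz', ht.tail (hyy ▸ hstep)⟩
        · obtain ⟨hy'vw, hy''vw⟩ := inCls_two hy hy'' hyy
          exact Or.inr ⟨⟨x', y', hx, hy'vw, ht⟩,
            ⟨y'', z', hy''vw, hz', Relation.ReflTransGen.single hstep⟩⟩
      · by_cases hyy : y' = y''
        · exact Or.inr ⟨hfirst, ⟨t, z', htv, hz', hrt.tail (hyy ▸ hstep)⟩⟩
        · obtain ⟨hy'vw, hy''vw⟩ := inCls_two hy hy'' hyy
          rcases hrt.cases_head with heq | ⟨m, hm1, hm2⟩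
          · exact Or.inr ⟨hfirst,
              ⟨y'', z', hy''vw, hz', Relation.ReflTransGen.single hstep⟩⟩
          · exact absurd (Relation.TransGen.head' hm1 hm2) (hB t y' htv hy'vw)
  intro x hx
  have hx' : Relation.TransGen ρ' x x := Relation.TransGen.mono hsub _ _ hx
  rcases main x x hx' with ⟨x', x'', hx1, hx2, ht⟩ | ⟨⟨x', s, hx1, hs, ht⟩, t, x''', htv, hx3, hrt⟩
  · by_cases hne : x' = x''
    · exact hρ x'' (hne ▸ ht)
    · obtain ⟨h1, h2⟩ := inCls_two hx1 hx2 hne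
      exact hB x' x'' h1 h2 ht
  · by_cases hne : x''' = x'
    · exact hB t s htv hs (Relation.TransGen.trans_right (hne ▸ hrt) ht)
    · obtain ⟨h3, h1⟩ := inCls_two hx3 hx1 hne
      exact hB x' s h1 hs ht

lemma mem_acyc_contract (he : Y.Adj v w) (h : r ∈ Acyc Y) (hdir : r w v)
    (hrev : IsAcyclicRel (revEdge r v w)) :
    contractRel r v w ∈ Acyc (contractG Y v w) :=
  ⟨isor_contract he h.1 h.2 hdir hrev, acyc_contract he h.1 h.2 hdir hrev⟩

end DC6b
section DC6c
variable {V : Type*} {Y : SimpleGraph V} {v w : V} {r : V → V → Prop}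

lemma lift_contract (he : Y.Adj v w) (hor : IsOrientation Y r)
    (hacyc : IsAcyclicRel r) (hdir : r w v)
    (hrev : IsAcyclicRel (revEdge r v w)) :
    liftC Y v w (contractRel r v w) = r := by
  have hvw : v ≠ w := he.ne
  funext i j
  apply propext
  constructor
  · rintro (⟨hi, hj⟩ | ⟨hadj, hp1, hp2, hcsub⟩)
    · rw [hi, hj]; exact hdir
    · have hij : i ≠ j := hadj.ne
      by_cases hiw : i = w
      · -- i = w, j ≠ v, j ≠ w
        have hjv : j ≠ v := fun h => hp2 ⟨hiw, h⟩
        have hjw : j ≠ w := fun h => hij (hiw.trans h.symm)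
        rw [hiw, subv_w, subv_of_ne hjw] at hcsub
        obtain ⟨-, -, -, hd⟩ := hcsub
        rcases hd with hD | ⟨-, h1⟩ | ⟨hj1, -⟩
        · -- r v j; need r w j
          rcases (hor.1 w j).1 (hiw ▸ hadj) with h | h
          · exact hiw ▸ h
          · exact (K1 hacyc hdir hD.1 h).elim
        · exact hiw ▸ h1
        · exact absurd hj1 hjv
      · by_cases hjw : j = w
        · have hiv : i ≠ v := fun h => hp1 ⟨h, hjw⟩
          rw [hjw, subv_w, subv_of_ne hiw] at hcsub
          obtain ⟨-, -, -, hd⟩ := hcsub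
          rcases hd with hD | ⟨hi1, -⟩ | ⟨-, h1⟩
          · -- r i v; need r i w
            rcases (hor.1 i w).1 (hjw ▸ hadj) with h | h
            · exact hjw ▸ h
            · exact (K2 hvw hdir hrev hiv hiw h hD.1).elim
          · exact absurd hi1 hiv
          · exact hjw ▸ h1
        · rw [subv_of_ne hiw, subv_of_ne hjw] at hcsub
          obtain ⟨-, -, -, hd⟩ := hcsub
          rcases hd with hD | ⟨hi1, h1⟩ | ⟨hj1, h1⟩
          · exact hD.1
          · -- i = v, r w j ; need r v j
            rcases (hor.1 i j).1 hadj with h | h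
            · exact h
            · exact (K2 hvw hdir hrev
                (fun hh => hij (hi1.trans hh.symm)) hjw h1 (hi1 ▸ h)).elim
          · -- j = v, r i w ; need r i v
            rcases (hor.1 i j).1 hadj with h | h
            · exact h
            · exact (K1 hacyc hdir (hj1 ▸ h) h1).elim
  · intro h
    have hadj : Y.Adj i j := orient_adj hor h
    have hij : i ≠ j := hadj.ne
    by_cases hp2 : i = w ∧ j = v
    · exact Or.inl hp2
    · by_cases hp1 : i = v ∧ j = w
      · have hvw' : r v w := by rw [← hp1.1, ← hp1.2]; exact h
        exact absurd hdir (hor.2 v w hvw')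
      · refine Or.inr ⟨hadj, hp1, hp2, ?_⟩
        by_cases hiw : i = w
        · have hjv : j ≠ v := fun hh => hp2 ⟨hiw, hh⟩
          have hjw : j ≠ w := fun hh => hij (hiw.trans hh.symm)
          rw [hiw, subv_w, subv_of_ne hjw]
          exact ⟨hvw, hjw, fun hh => hjv hh.symm, Or.inr (Or.inl ⟨rfl, hiw ▸ h⟩)⟩
        · by_cases hjw : j = w
          · have hiv : i ≠ v := fun hh => hp1 ⟨hh, hjw⟩
            rw [hjw, subv_w, subv_of_ne hiw]
            exact ⟨hiw, hvw, hiv, Or.inr (Or.inr ⟨rfl, hjw ▸ h⟩)⟩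
          · rw [subv_of_ne hiw, subv_of_ne hjw]
            exact ⟨hiw, hjw, hij, Or.inl ⟨h, by tauto⟩⟩

end DC6c
/-- the number of acyclic orientations satisfies the
deletion–contraction recursion α(Y) = α(Y−e) + α(Y/e) for every edge e = {v,w}. -/
theorem alpha_deletion_contraction {V : Type*} [Fintype V] [DecidableEq V]
    (Y : SimpleGraph V) (v w : V) (he : Y.Adj v w) :
    alpha Y = alpha (Y.deleteEdges {s(v, w)}) + alpha (contractG Y v w) := by
  classical
  have hvw : v ≠ w := he.ne
  let f : ↥(Acyc Y) → ↥(Acyc (Y.deleteEdges {s(v, w)})) ⊕ ↥(Acyc (contractG Y v w)) :=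
    fun r =>
      if hr : r.1 v w then Sum.inl ⟨delRel r.1 v w, mem_acyc_del r.2⟩
      else if hrev : IsAcyclicRel (revEdge r.1 v w) then
        Sum.inr ⟨contractRel r.1 v w,
          mem_acyc_contract he r.2 (dir_of_adj r.2.1 he hr) hrev⟩
      else Sum.inl ⟨delRel r.1 v w, mem_acyc_del r.2⟩
  have hinj : Function.Injective f := by
    rintro ⟨r1, hm1⟩ ⟨r2, hm2⟩ heq
    apply Subtype.ext
    show r1 = r2
    simp only [f] at heq
    by_cases h1 : r1 v w <;> by_cases h2 : r2 v w
    · rw [dif_pos h1, dif_pos h2] at heq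
      have hd : delRel r1 v w = delRel r2 v w :=
        congrArg Subtype.val (Sum.inl.inj heq)
      exact recover_del hm1.1 hm2.1 hd (iff_of_true h1 h2)
    · rw [dif_pos h1] at heq
      by_cases hrev2 : IsAcyclicRel (revEdge r2 v w)
      · rw [dif_neg h2, dif_pos hrev2] at heq
        exact absurd heq (by simp)
      · rw [dif_neg h2, dif_neg hrev2] at heq
        have hd : delRel r1 v w = delRel r2 v w :=
          congrArg Subtype.val (Sum.inl.inj heq)
        have hr2 : revEdge r1 v w = r2 := by
          apply recover_del (isor_rev hm1.1) hm2.1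
          · rw [delRel_rev, hd]
          · rw [rev_apply_vw]
            exact iff_of_false (hm1.1.2 v w h1) h2
        rw [← hr2, rev_rev] at hrev2
        exact absurd hm1.2 hrev2
    · rw [dif_pos h2] at heq
      by_cases hrev1 : IsAcyclicRel (revEdge r1 v w)
      · rw [dif_neg h1, dif_pos hrev1] at heq
        exact absurd heq (by simp)
      · rw [dif_neg h1, dif_neg hrev1] at heq
        have hd : delRel r1 v w = delRel r2 v w :=
          congrArg Subtype.val (Sum.inl.inj heq)
        have hr1 : revEdge r2 v w = r1 := by
          apply recover_del (isor_rev hm2.1) hm1.1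
          · rw [delRel_rev, hd]
          · rw [rev_apply_vw]
            exact iff_of_false (hm2.1.2 v w h2) h1
        rw [← hr1, rev_rev] at hrev1
        exact absurd hm2.2 hrev1
    · by_cases hrev1 : IsAcyclicRel (revEdge r1 v w) <;>
        by_cases hrev2 : IsAcyclicRel (revEdge r2 v w)
      · rw [dif_neg h1, dif_pos hrev1, dif_neg h2, dif_pos hrev2] at heq
        have hc : contractRel r1 v w = contractRel r2 v w :=
          congrArg Subtype.val (Sum.inr.inj heq)
        have e1 := lift_contract he hm1.1 hm1.2 (dir_of_adj hm1.1 he h1) hrev1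
        have e2 := lift_contract he hm2.1 hm2.2 (dir_of_adj hm2.1 he h2) hrev2
        rw [← e1, ← e2, hc]
      · rw [dif_neg h1, dif_pos hrev1, dif_neg h2, dif_neg hrev2] at heq
        exact absurd heq (by simp)
      · rw [dif_neg h1, dif_neg hrev1, dif_neg h2, dif_pos hrev2] at heq
        exact absurd heq (by simp)
      · rw [dif_neg h1, dif_neg hrev1, dif_neg h2, dif_neg hrev2] at heq
        have hd : delRel r1 v w = delRel r2 v w :=
          congrArg Subtype.val (Sum.inl.inj heq)
        exact recover_del hm1.1 hm2.1 hd (iff_of_false h1 h2)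
  have hsurj : Function.Surjective f := by
    rintro (⟨ρ, hρmem⟩ | ⟨c, hcmem⟩)
    · by_cases hext : IsAcyclicRel (addE ρ v w)
      · refine ⟨⟨addE ρ v w, ⟨isor_add he hρmem.1 (Or.inl ⟨rfl, rfl⟩), hext⟩⟩, ?_⟩
        have hvw' : addE ρ v w v w := Or.inr ⟨rfl, rfl⟩
        simp only [f]
        rw [dif_pos hvw']
        exact congrArg Sum.inl (Subtype.ext (delRel_add hρmem.1 (Or.inl ⟨rfl, rfl⟩)))
      · have hext' : IsAcyclicRel (addE ρ w v) :=
          acyc_add_of_not hρmem.2 hvw hext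
        have hmem : addE ρ w v ∈ Acyc Y :=
          ⟨isor_add he hρmem.1 (Or.inr ⟨rfl, rfl⟩), hext'⟩
        have hnvw : ¬ addE ρ w v v w := by
          rintro (h | ⟨h, -⟩)
          · exact rho_not_pair hρmem.1 h (Or.inl ⟨rfl, rfl⟩)
          · exact hvw h
        have hnrev : ¬ IsAcyclicRel (revEdge (addE ρ w v) v w) := by
          rw [rev_add hvw hρmem.1]
          exact hext
        refine ⟨⟨addE ρ w v, hmem⟩, ?_⟩
        simp only [f]
        rw [dif_neg hnvw, dif_neg hnrev]
        exact congrArg Sum.inl (Subtype.ext (delRel_add hρmem.1 (Or.inr ⟨rfl, rfl⟩)))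
    · have hmem : liftC Y v w c ∈ Acyc Y :=
        ⟨isor_lift he hcmem.1, acyc_lift hvw hcmem.2⟩
      refine ⟨⟨liftC Y v w c, hmem⟩, ?_⟩
      simp only [f]
      rw [dif_neg (lift_not_vw hvw), dif_pos (acyc_rev_lift hvw hcmem.2)]
      exact congrArg Sum.inr (Subtype.ext (contract_lift he hcmem.1))
  have := Nat.card_eq_of_bijective f ⟨hinj, hsurj⟩
  unfold alpha
  rw [this, Nat.card_sum]
end AcycPaper
end

section
/- Let Y be a connected finite simple graph. If Y is not bipartite, then δ(Y) = κ(Y)/2; if Y is bipartite, then δ(Y) = (κ(Y)+1)/2. In either case δ(Y) = ⌈κ(Y)/2⌉. -/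
namespace AcycPaper

variable {V : Type*}

/-- The reversal of an orientation: every edge direction is reversed. -/
def reverseRel (r : V → V → Prop) : V → V → Prop := fun i j => r j i

/-- One step of the coarser relation: a click, or a full reversal. -/
def DStep (Y : SimpleGraph V) (r r' : V → V → Prop) : Prop :=
  ClickStep Y r r' ∨ (r ∈ Acyc Y ∧ r' = reverseRel r)

/-- The set of δ-equivalence classes of acyclic orientations. -/
def DQuot (Y : SimpleGraph V) := Quot (fun a b : Acyc Y => DStep Y a.1 b.1)

/-- δ(Y): number of δ-equivalence classes. -/
noncomputable def delta (Y : SimpleGraph V) : ℕ := Nat.card (DQuot Y)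

/-! ### Auxiliary development -/

section Aux

variable {Y : SimpleGraph V} {r s : V → V → Prop}

lemma IsOrientation.adj (h : IsOrientation Y r) {i j : V} (hr : r i j) : Y.Adj i j :=
  (h.1 i j).mpr (Or.inl hr)

lemma IsOrientation.ne (h : IsOrientation Y r) {i j : V} (hr : r i j) : i ≠ j :=
  (h.adj hr).ne

lemma IsOrientation.resolve (h : IsOrientation Y r) {i j : V} (hadj : Y.Adj i j)
    (hn : ¬ r j i) : r i j := ((h.1 i j).mp hadj).resolve_right hn

/-- A strictly increasing level function forces acyclicity. -/
lemma acyclic_of_level (ℓ : V → ℤ) (h : ∀ i j, r i j → ℓ i < ℓ j) : IsAcyclicRel r := by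
  intro v hv
  have key : ∀ a b, Relation.TransGen r a b → ℓ a < ℓ b := by
    intro a b hab
    induction hab with
    | single h1 => exact h a _ h1
    | tail _ h2 ih => exact ih.trans (h _ _ h2)
  exact absurd (key v v hv) (lt_irrefl _)

/-- A "potential" (edges raise the level by exactly 1) forces acyclicity. -/
lemma acyclic_of_potential (θ : V → ℤ) (h : ∀ i j, r i j → θ j = θ i + 1) :
    IsAcyclicRel r :=
  acyclic_of_level θ (fun i j hij => by have := h i j hij; omega)

lemma reverseRel_reverseRel (r : V → V → Prop) : reverseRel (reverseRel r) = r := rfl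

lemma IsOrientation.reverse (h : IsOrientation Y r) : IsOrientation Y (reverseRel r) := by
  constructor
  · intro i j
    rw [h.1 i j]
    exact or_comm
  · intro i j hij hji
    exact h.2 j i hij hji

lemma IsAcyclicRel.reverse (h : IsAcyclicRel r) : IsAcyclicRel (reverseRel r) := by
  intro v hv
  exact h v (Relation.transGen_swap.mpr hv)

lemma reverseRel_mem_Acyc (h : r ∈ Acyc Y) : reverseRel r ∈ Acyc Y :=
  ⟨h.1.reverse, h.2.reverse⟩

lemma click_click (r : V → V → Prop) (v : V) : click (click r v) v = r := by
  funext i j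
  by_cases h : v = i ∨ v = j
  · simp only [click, if_pos h, if_pos (h.symm.imp id id), if_pos (Or.symm h)]
  · simp only [click, if_neg h]

lemma reverseRel_click (r : V → V → Prop) (v : V) :
    reverseRel (click r v) = click (reverseRel r) v := by
  funext i j
  simp only [reverseRel, click]
  by_cases h : v = i ∨ v = j
  · rw [if_pos h, if_pos (Or.symm h)]
  · rw [if_neg h, if_neg (fun hc => h (Or.symm hc))]

lemma IsOrientation.click (h : IsOrientation Y r) (v : V) : IsOrientation Y (click r v) := by
  constructor
  · intro i j
    rw [h.1 i j]
    unfold AcycPaper.click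
    by_cases hc : v = i ∨ v = j
    · rw [if_pos hc, if_pos (Or.symm hc)]; exact or_comm
    · rw [if_neg hc, if_neg (fun hc2 => hc (Or.symm hc2))]
  · intro i j hij hji
    unfold AcycPaper.click at hij hji
    by_cases hc : v = i ∨ v = j
    · rw [if_pos hc] at hij
      rw [if_pos (Or.symm hc)] at hji
      exact h.2 j i hij hji
    · rw [if_neg hc] at hij
      rw [if_neg (fun hc2 => hc (Or.symm hc2))] at hji
      exact h.2 i j hij hji

end Aux

section Flow

open Classical in
/-- Sign of an oriented edge. -/
noncomputable def sgn (r : V → V → Prop) (i j : V) : ℤ := if r i j then 1 else -1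

variable {Y : SimpleGraph V}

/-- Flow (number of forward minus backward edges) of an orientation along a walk. -/
noncomputable def flow (r : V → V → Prop) : {u v : V} → Y.Walk u v → ℤ
  | _, _, .nil => 0
  | _, _, .cons (u := i) (v := j) _ p => sgn r i j + flow r p

@[simp] lemma flow_nil (r : V → V → Prop) {u : V} : flow r (SimpleGraph.Walk.nil : Y.Walk u u) = 0 := rfl

@[simp] lemma flow_cons (r : V → V → Prop) {u v w : V} (h : Y.Adj u v) (p : Y.Walk v w) :
    flow r (SimpleGraph.Walk.cons h p) = sgn r u v + flow r p := rfl

lemma flow_append (r : V → V → Prop) {u v w : V} (p : Y.Walk u v) (q : Y.Walk v w) :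
    flow r (p.append q) = flow r p + flow r q := by
  induction p with
  | nil => simp
  | cons h p ih => simp [SimpleGraph.Walk.cons_append, ih]; ring

variable {r : V → V → Prop}

lemma sgn_symm (h : IsOrientation Y r) {i j : V} (hadj : Y.Adj i j) :
    sgn r j i = - sgn r i j := by
  unfold sgn
  by_cases hij : r i j
  · rw [if_pos hij, if_neg (h.2 i j hij)]
  · rw [if_pos (h.resolve hadj.symm hij), if_neg hij]; ring

lemma flow_reverse (h : IsOrientation Y r) {u v : V} (p : Y.Walk u v) :
    flow r p.reverse = - flow r p := by
  induction p with
  | nil => simp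
  | cons hadj p ih =>
      rw [SimpleGraph.Walk.reverse_cons, flow_append, ih, flow_cons, flow_cons, flow_nil,
        sgn_symm h hadj]
      ring

lemma flow_grad {s : V → V → Prop} (ψ : V → ℤ)
    (h : ∀ i j, Y.Adj i j → sgn s i j = sgn r i j + (ψ j - ψ i)) :
    ∀ {u v : V} (p : Y.Walk u v), flow s p = flow r p + (ψ v - ψ u)
  | _, _, .nil => by simp
  | _, _, .cons hadj p => by
      rw [flow_cons, flow_cons, h _ _ hadj, flow_grad ψ h p]
      ring

open Classical in
lemma flow_click (h : IsOrientation Y r) {v : V} (hv : IsSource r v) {u₁ u₂ : V}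
    (p : Y.Walk u₁ u₂) :
    flow (click r v) p = flow r p +
      ((if u₂ = v then (2:ℤ) else 0) - (if u₁ = v then (2:ℤ) else 0)) := by
  apply flow_grad (fun x => if x = v then (2:ℤ) else 0)
  intro i j hadj
  try dsimp only
  unfold sgn AcycPaper.click
  by_cases hc : v = i ∨ v = j
  · rcases hc with rfl | rfl
    · have h1 : ¬ r j v := hv j
      have h2 : r v j := h.resolve hadj h1
      rw [if_pos (Or.inl rfl), if_neg h1, if_pos h2,
        if_neg (fun hh : j = v => hadj.ne hh.symm), if_pos rfl]
      ring
    · have h1 : ¬ r i v := hv i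
      have h2 : r v i := h.resolve hadj.symm h1
      rw [if_pos (Or.inr rfl), if_pos h2, if_neg h1, if_pos rfl,
        if_neg (fun hh : i = v => hadj.ne hh)]
      ring
  · push_neg at hc
    rw [if_neg (fun hor : v = i ∨ v = j => by tauto),
      if_neg (fun hh : i = v => hc.1 hh.symm), if_neg (fun hh : j = v => hc.2 hh.symm)]
    ring

open Classical in
lemma flow_click_closed (h : IsOrientation Y r) {v : V} (hv : IsSource r v) {u : V}
    (p : Y.Walk u u) : flow (click r v) p = flow r p := by
  rw [flow_click h hv p]; ring

lemma sgn_reverseRel (r : V → V → Prop) (i j : V) : sgn (reverseRel r) i j = sgn r j i := rfl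

lemma flow_reverseRel (h : IsOrientation Y r) {u v : V} (p : Y.Walk u v) :
    flow (reverseRel r) p = - flow r p := by
  induction p with
  | nil => simp
  | @cons a b c hadj p ih =>
      rw [flow_cons, flow_cons, ih, sgn_reverseRel, sgn_symm h hadj]
      ring

lemma sgn_cases (r : V → V → Prop) (i j : V) : sgn r i j = 1 ∨ sgn r i j = -1 := by
  unfold sgn; split <;> simp

lemma flow_emod_two (r : V → V → Prop) {u v : V} (p : Y.Walk u v) :
    flow r p % 2 = (p.length : ℤ) % 2 := by
  induction p with
  | nil => simp
  | @cons a b c hadj p ih =>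
      rw [flow_cons, SimpleGraph.Walk.length_cons]
      push_cast
      rcases sgn_cases r a b with h1 | h1 <;> rw [h1] <;> omega

end Flow

section Sigma

variable {Y : SimpleGraph V}

/-- Reversal as a map on acyclic orientations. -/
def revA (a : Acyc Y) : Acyc Y := ⟨reverseRel a.1, reverseRel_mem_Acyc a.2⟩

/-- Class of an acyclic orientation in `KQuot`. -/
def kmk (a : Acyc Y) : KQuot Y := Quot.mk _ a

lemma kmk_rev_welldef {a b : Acyc Y} (h : ClickStep Y a.1 b.1) :
    kmk (revA a) = kmk (revA b) := by
  obtain ⟨ha, v, hv, hb⟩ := h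
  refine (Quot.sound ?_).symm
  refine ⟨reverseRel_mem_Acyc b.2, v, ?_, ?_⟩
  · intro j hj
    have hbvj : b.1 v j := hj
    rw [hb] at hbvj
    unfold click at hbvj
    rw [if_pos (Or.inl rfl)] at hbvj
    exact hv j hbvj
  · show reverseRel a.1 = click (reverseRel b.1) v
    rw [hb, reverseRel_click, click_click]

/-- Reversal induced on `KQuot`. -/
def sigmaMap (Y : SimpleGraph V) : KQuot Y → KQuot Y :=
  Quot.lift (fun a => kmk (revA a)) (fun _ _ h => kmk_rev_welldef h)

@[simp] lemma sigmaMap_kmk (a : Acyc Y) : sigmaMap Y (kmk a) = kmk (revA a) := rfl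

lemma revA_revA (a : Acyc Y) : revA (revA a) = a := Subtype.ext rfl

lemma sigmaMap_sigmaMap (x : KQuot Y) : sigmaMap Y (sigmaMap Y x) = x := by
  induction x using Quot.ind with
  | mk a => show kmk (revA (revA a)) = kmk a; rw [revA_revA]

lemma flow_eq_of_eqvGen {a b : Acyc Y}
    (h : Relation.EqvGen (fun a b : Acyc Y => ClickStep Y a.1 b.1) a b) {u : V}
    (p : Y.Walk u u) : flow a.1 p = flow b.1 p := by
  induction h with
  | rel x y hxy =>
      obtain ⟨hx, v, hv, hy⟩ := hxy
      rw [hy]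
      exact (flow_click_closed hx.1 hv p).symm
  | refl => rfl
  | symm _ _ _ ih => exact ih.symm
  | trans _ _ _ _ _ ih1 ih2 => exact ih1.trans ih2

lemma flow_eq_of_kmk_eq {a b : Acyc Y} (h : kmk a = kmk b) {u : V} (p : Y.Walk u u) :
    flow a.1 p = flow b.1 p :=
  flow_eq_of_eqvGen (Quot.eqvGen_exact h) p

lemma flow_eq_zero_of_fixed {a : Acyc Y} (h : sigmaMap Y (kmk a) = kmk a) {u : V}
    (p : Y.Walk u u) : flow a.1 p = 0 := by
  have h1 : flow (revA a).1 p = flow a.1 p := flow_eq_of_kmk_eq h p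
  have h2 : flow (reverseRel a.1) p = - flow a.1 p := flow_reverseRel a.2.1 p
  have : (revA a).1 = reverseRel a.1 := rfl
  rw [this, h2] at h1
  omega

/-- `DQuot` is the quotient of `KQuot` by the reversal involution. -/
noncomputable def dEquiv (Y : SimpleGraph V) :
    DQuot Y ≃ Quot (fun x y : KQuot Y => sigmaMap Y x = y) := by
  refine
    { toFun := Quot.lift (fun a => Quot.mk _ (kmk a)) ?_
      invFun := Quot.lift (Quot.lift (fun a => Quot.mk _ a) ?_) ?_
      left_inv := ?_
      right_inv := ?_ }
  · intro a b h
    rcases h with hcs | ⟨ha, hrev⟩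
    · exact congrArg _ (Quot.sound hcs)
    · have hb : b = revA a := Subtype.ext hrev
      subst hb
      exact Quot.sound (rfl : sigmaMap Y (kmk a) = kmk (revA a))
  · intro a b h
    exact Quot.sound (Or.inl h)
  · intro x y h
    subst h
    induction x using Quot.ind with
    | mk a =>
        show Quot.mk _ a = Quot.mk _ (revA a)
        exact Quot.sound (Or.inr ⟨a.2, rfl⟩)
  · intro x
    induction x using Quot.ind with
    | mk a => rfl
  · intro x
    induction x using Quot.ind with
    | mk q =>
        induction q using Quot.ind with
        | mk a => rfl

end Sigma

section Counting

/-- Orbits of the equivalence generated by an involution have at most two elements. -/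
lemma eqvGen_involution {X : Type*} {f : X → X} (hf : ∀ x, f (f x) = x) {x y : X}
    (h : Relation.EqvGen (fun a b => f a = b) x y) : y = x ∨ y = f x := by
  induction h with
  | rel a b hab => exact Or.inr hab.symm
  | refl => exact Or.inl rfl
  | symm a b _ ih =>
      rcases ih with rfl | rfl
      · exact Or.inl rfl
      · right; rw [hf]
  | trans a b c _ _ ih1 ih2 =>
      rcases ih1 with rfl | rfl
      · exact ih2
      · rcases ih2 with rfl | rfl
        · exact Or.inr rfl
        · left; rw [hf]

lemma mk_eq_iff_involution {X : Type*} {f : X → X} (hf : ∀ x, f (f x) = x) {x y : X} :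
    Quot.mk (fun a b => f a = b) x = Quot.mk (fun a b => f a = b) y ↔ (y = x ∨ y = f x) := by
  constructor
  · intro h
    exact eqvGen_involution hf (Quot.eqvGen_exact h)
  · rintro (rfl | rfl)
    · rfl
    · exact Quot.sound rfl

/-- Counting classes of an involution on a finite type. -/
lemma two_mul_card_quot_involution {X : Type*} [Finite X] (f : X → X)
    (hf : ∀ x, f (f x) = x) :
    2 * Nat.card (Quot fun x y => f x = y) = Nat.card X + Nat.card {x : X // f x = x} := by
  classical
  set R := fun x y : X => f x = y with hR
  set Q := Quot R
  -- build a bijection X ⊕ Fix ≃ Q × Bool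
  let g : X ⊕ {x : X // f x = x} → Q × Bool :=
    fun z => match z with
      | Sum.inl x => (Quot.mk R x, decide (x = (Quot.mk R x).out))
      | Sum.inr x => (Quot.mk R x.1, false)
  have hout : ∀ x : X, (Quot.mk R x).out = x ∨ (Quot.mk R x).out = f x := by
    intro x
    exact (mk_eq_iff_involution hf).mp ((Quot.out_eq (Quot.mk R x)).symm)
  have fixed_out : ∀ x : X, f x = x → (Quot.mk R x).out = x := by
    intro x hfx
    rcases hout x with ho | ho
    · exact ho
    · rw [ho, hfx]
  have fixed_of_mk_eq : ∀ x y : X, Quot.mk R x = Quot.mk R y → f y = y → f x = x := by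
    intro x y h1 hfy
    rcases (mk_eq_iff_involution hf).mp h1 with hyx | hyx
    · rw [← hyx]; exact hfy
    · have h2 : f (f x) = f x := by rw [← hyx]; exact hfy
      calc f x = f (f (f x)) := by rw [hf]
        _ = x := by rw [h2, hf]
  have hginj : Function.Injective g := by
    rintro (x | x) (y | y) hxy <;> simp only [g, Prod.mk.injEq] at hxy
    · obtain ⟨h1, h2⟩ := hxy
      rcases (mk_eq_iff_involution hf).mp h1 with hyx | hyx
      · exact congrArg _ hyx.symm
      · rw [hyx] at h1 h2
        rw [← h1, decide_eq_decide] at h2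
        rcases hout x with ho | ho
        · have h3 : f x = (Quot.mk R x).out := h2.mp ho.symm
          have h5 : y = x := by rw [hyx, h3, ho]
          exact congrArg _ h5.symm
        · have h4 : x = (Quot.mk R x).out := h2.mpr ho.symm
          have h5 : y = x := by rw [hyx, ← ho, ← h4]
          exact congrArg _ h5.symm
    · obtain ⟨h1, h2⟩ := hxy
      exfalso
      have hfx : f x = x := fixed_of_mk_eq x y.1 h1 y.2
      rw [fixed_out x hfx] at h2
      simp at h2
    · obtain ⟨h1, h2⟩ := hxy
      exfalso
      have hfy : f y = y := fixed_of_mk_eq y x.1 h1.symm x.2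
      rw [fixed_out y hfy] at h2
      simp at h2
    · obtain ⟨h1, _⟩ := hxy
      rcases (mk_eq_iff_involution hf).mp h1 with h | h
      · exact congrArg Sum.inr (Subtype.ext h.symm)
      · exact congrArg Sum.inr (Subtype.ext (h.trans x.2).symm)
  have hgsurj : Function.Surjective g := by
    rintro ⟨q, b⟩
    cases b
    · by_cases hfix : f q.out = q.out
      · exact ⟨Sum.inr ⟨q.out, hfix⟩, by simp [g, Quot.out_eq]⟩
      · refine ⟨Sum.inl (f q.out), ?_⟩
        simp only [g, Prod.mk.injEq]
        have hq : Quot.mk R (f q.out) = q := by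
          rw [show Quot.mk R (f q.out) = Quot.mk R q.out from
            (mk_eq_iff_involution hf).mpr (Or.inr (hf q.out).symm), Quot.out_eq]
        refine ⟨hq, ?_⟩
        rw [hq]
        simp only [decide_eq_false_iff_not]
        intro hcon
        exact hfix hcon
    · refine ⟨Sum.inl q.out, ?_⟩
      simp [g, Quot.out_eq]
  have hcard := Nat.card_eq_of_bijective g ⟨hginj, hgsurj⟩
  have hb : Nat.card Bool = 2 := by simp [Nat.card_eq_fintype_card]
  rw [Nat.card_sum, Nat.card_prod, hb] at hcard
  omega

end Counting

section OddWalk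

variable {Y : SimpleGraph V}

lemma odd_closed_walk_of_not_colorable (hY : Y.Connected) (h : ¬ Y.Colorable 2) :
    ∃ (u : V) (p : Y.Walk u u), Odd p.length := by
  classical
  by_contra hodd
  push_neg at hodd
  apply h
  obtain ⟨u0⟩ := hY.nonempty
  let w : ∀ v, Y.Walk u0 v := fun v => (hY.preconnected u0 v).some
  refine ⟨SimpleGraph.Coloring.mk (fun v => (⟨(w v).length % 2, by omega⟩ : Fin 2)) ?_⟩
  intro a b hab hcol
  have hpar : (w a).length % 2 = (w b).length % 2 := by
    simpa using congrArg Fin.val hcol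
  have hclosed := hodd u0 ((w a).append (SimpleGraph.Walk.cons hab ((w b).reverse)))
  rw [Nat.odd_iff] at hclosed
  rw [SimpleGraph.Walk.length_append, SimpleGraph.Walk.length_cons,
    SimpleGraph.Walk.length_reverse] at hclosed
  omega

lemma no_fixed_of_not_colorable (hY : Y.Connected) (h : ¬ Y.Colorable 2) :
    IsEmpty {x : KQuot Y // sigmaMap Y x = x} := by
  constructor
  rintro ⟨x, hx⟩
  obtain ⟨a, rfl⟩ := Quot.exists_rep x
  obtain ⟨u, p, hodd⟩ := odd_closed_walk_of_not_colorable hY h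
  have h0 : flow a.1 p = 0 := flow_eq_zero_of_fixed hx p
  have hm := flow_emod_two (Y := Y) a.1 p
  rw [h0] at hm
  rw [Nat.odd_iff] at hodd
  omega

end OddWalk

section Bor

variable {Y : SimpleGraph V} {c : V → Bool}

/-- The canonical acyclic orientation associated to a proper 2-coloring. -/
def bor (Y : SimpleGraph V) (c : V → Bool) : V → V → Prop :=
  fun i j => Y.Adj i j ∧ c i = false ∧ c j = true

/-- A proper 2-coloring by booleans. -/
def Proper (Y : SimpleGraph V) (c : V → Bool) : Prop := ∀ i j, Y.Adj i j → c i ≠ c j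

lemma bor_orientation (hc : Proper Y c) : IsOrientation Y (bor Y c) := by
  constructor
  · intro i j
    constructor
    · intro hadj
      have := hc i j hadj
      cases hci : c i <;> cases hcj : c j <;> simp_all [bor]
      · exact hadj.symm
    · rintro (⟨h, _⟩ | ⟨h, _⟩)
      · exact h
      · exact h.symm
  · rintro i j ⟨_, h1, h2⟩ ⟨_, h3, h4⟩
    rw [h1] at h4
    exact Bool.false_ne_true h4

lemma bor_mem_Acyc (hc : Proper Y c) : bor Y c ∈ Acyc Y := by
  refine ⟨bor_orientation hc, acyclic_of_potential (fun v => if c v then 1 else 0) ?_⟩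
  rintro i j ⟨_, h1, h2⟩
  try dsimp only
  simp [h1, h2]

lemma bor_not (Y : SimpleGraph V) (c : V → Bool) :
    bor Y (fun v => !(c v)) = reverseRel (bor Y c) := by
  funext i j
  apply propext
  constructor
  · rintro ⟨hadj, h1, h2⟩
    exact ⟨hadj.symm, by simpa using h2, by simpa using h1⟩
  · rintro ⟨hadj, h1, h2⟩
    exact ⟨hadj.symm, by simp [h2], by simp [h1]⟩

open Classical in
/-- After clicking the vertices in the list `L` (all of color `false`). -/
def borL (Y : SimpleGraph V) (c : V → Bool) (L : List V) : V → V → Prop :=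
  fun i j => Y.Adj i j ∧
    ((c i = false ∧ c j = true ∧ i ∉ L) ∨ (c i = true ∧ c j = false ∧ j ∈ L))

lemma borL_nil (Y : SimpleGraph V) (c : V → Bool) : borL Y c [] = bor Y c := by
  funext i j
  simp [borL, bor]

lemma borL_orientation (hc : Proper Y c) (L : List V) : IsOrientation Y (borL Y c L) := by
  constructor
  · intro i j
    constructor
    · intro hadj
      have hne := hc i j hadj
      by_cases hci : c i = false
      · have hcj : c j = true := by cases hcj : c j <;> simp_all
        by_cases hiL : i ∈ L
        · exact Or.inr ⟨hadj.symm, Or.inr ⟨hcj, hci, hiL⟩⟩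
        · exact Or.inl ⟨hadj, Or.inl ⟨hci, hcj, hiL⟩⟩
      · have hci' : c i = true := by cases hcit : c i <;> simp_all
        have hcj : c j = false := by cases hcj : c j <;> simp_all
        by_cases hjL : j ∈ L
        · exact Or.inl ⟨hadj, Or.inr ⟨hci', hcj, hjL⟩⟩
        · exact Or.inr ⟨hadj.symm, Or.inl ⟨hcj, hci', hjL⟩⟩
    · rintro (⟨h, _⟩ | ⟨h, _⟩)
      · exact h
      · exact h.symm
  · rintro i j ⟨hadj, h1 | h1⟩ ⟨hadj', h2 | h2⟩
    · exact absurd h2.1 (by rw [h1.2.1]; simp)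
    · exact absurd h2.2.2 h1.2.2
    · exact absurd h1.2.2 h2.2.2
    · exact absurd h1.1 (by rw [h2.2.1]; simp)

open Classical in
lemma borL_mem_Acyc (hc : Proper Y c) (L : List V) : borL Y c L ∈ Acyc Y := by
  refine ⟨borL_orientation hc L,
    acyclic_of_potential (fun v => if c v = true then 1 else if v ∈ L then 2 else 0) ?_⟩
  rintro i j ⟨hadj, ⟨h1, h2, h3⟩ | ⟨h1, h2, h3⟩⟩ <;> try dsimp only
  · simp [h1, h2, h3]
  · simp [h1, h2, h3]

lemma borL_source (hx : c x = false) (hxL : x ∉ L) : IsSource (borL Y c L) x := by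
  rintro j ⟨hadj, ⟨h1, h2, h3⟩ | ⟨h1, h2, h3⟩⟩
  · rw [hx] at h2; exact Bool.false_ne_true h2
  · exact hxL h3

lemma click_borL (hx : c x = false) (hxL : x ∉ L) :
    click (borL Y c L) x = borL Y c (x :: L) := by
  funext i j
  apply propext
  unfold click
  by_cases hcond : x = i ∨ x = j
  · rw [if_pos hcond]
    rcases hcond with rfl | rfl
    · -- x = i : both sides false
      constructor
      · rintro ⟨hadj, ⟨h1, h2, h3⟩ | ⟨h1, h2, h3⟩⟩
        · rw [hx] at h2; exact absurd h2 Bool.false_ne_true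
        · exact absurd h3 hxL
      · rintro ⟨hadj, ⟨h1, h2, h3⟩ | ⟨h1, h2, h3⟩⟩
        · exact absurd (List.mem_cons_self) h3
        · rw [hx] at h1; exact absurd h1 Bool.false_ne_true
    · -- x = j
      constructor
      · rintro ⟨hadj, ⟨h1, h2, h3⟩ | ⟨h1, h2, h3⟩⟩
        · exact ⟨hadj.symm, Or.inr ⟨h2, h1, List.mem_cons_self⟩⟩
        · rw [hx] at h1; exact absurd h1 Bool.false_ne_true
      · rintro ⟨hadj, ⟨h1, h2, h3⟩ | ⟨h1, h2, h3⟩⟩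
        · rw [hx] at h2; exact absurd h2 Bool.false_ne_true
        · exact ⟨hadj.symm, Or.inl ⟨h2, h1, hxL⟩⟩
  · rw [if_neg hcond]
    push_neg at hcond
    constructor
    · rintro ⟨hadj, ⟨h1, h2, h3⟩ | ⟨h1, h2, h3⟩⟩
      · exact ⟨hadj, Or.inl ⟨h1, h2, fun hmem => by
          rcases List.mem_cons.mp hmem with rfl | hmem2
          · exact hcond.1 rfl
          · exact h3 hmem2⟩⟩
      · exact ⟨hadj, Or.inr ⟨h1, h2, List.mem_cons_of_mem x h3⟩⟩
    · rintro ⟨hadj, ⟨h1, h2, h3⟩ | ⟨h1, h2, h3⟩⟩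
      · exact ⟨hadj, Or.inl ⟨h1, h2, fun hmem => h3 (List.mem_cons_of_mem x hmem)⟩⟩
      · rcases List.mem_cons.mp h3 with rfl | hmem2
        · exact absurd rfl hcond.2
        · exact ⟨hadj, Or.inr ⟨h1, h2, hmem2⟩⟩

lemma kmk_borL (hc : Proper Y c) :
    ∀ L : List V, L.Nodup → (∀ z ∈ L, c z = false) →
      kmk ⟨bor Y c, bor_mem_Acyc hc⟩ = kmk (⟨borL Y c L, borL_mem_Acyc hc L⟩ : Acyc Y) := by
  intro L hnd hall
  induction L with
  | nil =>
      congr 1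
      exact Subtype.ext (borL_nil Y c).symm
  | cons x L ih =>
      have hnd' : L.Nodup := (List.nodup_cons.mp hnd).2
      have hxL : x ∉ L := (List.nodup_cons.mp hnd).1
      have hall' : ∀ z ∈ L, c z = false := fun z hz => hall z (List.mem_cons_of_mem x hz)
      have hx : c x = false := hall x (List.mem_cons_self)
      refine (ih hnd' hall').trans (Quot.sound ?_)
      exact ⟨borL_mem_Acyc hc L, x, borL_source hx hxL, (click_borL hx hxL).symm⟩

lemma kmk_bor_fixed [Fintype V] (hc : Proper Y c) :
    sigmaMap Y (kmk ⟨bor Y c, bor_mem_Acyc hc⟩) = kmk ⟨bor Y c, bor_mem_Acyc hc⟩ := by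
  classical
  set L : List V := (Finset.univ.filter (fun v => c v = false)).toList with hL
  have hnd : L.Nodup := Finset.nodup_toList _
  have hall : ∀ z ∈ L, c z = false := by
    intro z hz
    rw [hL, Finset.mem_toList, Finset.mem_filter] at hz
    exact hz.2
  have hchain := kmk_borL hc L hnd hall
  have hrev : borL Y c L = reverseRel (bor Y c) := by
    rw [← bor_not]
    funext i j
    apply propext
    have hmem : ∀ z : V, z ∈ L ↔ c z = false := by
      intro z
      rw [hL, Finset.mem_toList, Finset.mem_filter]
      simp
    constructor
    · rintro ⟨hadj, ⟨h1, h2, h3⟩ | ⟨h1, h2, h3⟩⟩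
      · exact absurd ((hmem i).mpr h1) h3
      · exact ⟨hadj, by simp [h1], by simp [(hmem j).mp h3]⟩
    · rintro ⟨hadj, h1, h2⟩
      have hci : c i = true := by cases hcit : c i <;> simp_all
      have hcj : c j = false := by cases hcjt : c j <;> simp_all
      exact ⟨hadj, Or.inr ⟨hci, hcj, (hmem j).mpr hcj⟩⟩
  show kmk (revA _) = _
  have : revA (⟨bor Y c, bor_mem_Acyc hc⟩ : Acyc Y) =
      ⟨borL Y c L, borL_mem_Acyc hc L⟩ := Subtype.ext hrev.symm
  rw [this]
  exact hchain.symm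

end Bor

section Descent

variable {Y : SimpleGraph V}

lemma exists_potential (hY : Y.Connected) {s : V → V → Prop} (hs : s ∈ Acyc Y)
    (h0 : ∀ (u : V) (p : Y.Walk u u), flow s p = 0) :
    ∃ θ : V → ℤ, ∀ i j, s i j → θ j = θ i + 1 := by
  classical
  obtain ⟨u0⟩ := hY.nonempty
  let w : ∀ v, Y.Walk u0 v := fun v => (hY.preconnected u0 v).some
  refine ⟨fun v => flow s (w v), ?_⟩
  intro i j hij
  have hadj := hs.1.adj hij
  have hclosed := h0 u0 ((w i).append (SimpleGraph.Walk.cons hadj ((w j).reverse)))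
  rw [flow_append, flow_cons, flow_reverse hs.1] at hclosed
  have hsgn : sgn s i j = 1 := by unfold sgn; rw [if_pos hij]
  rw [hsgn] at hclosed
  dsimp only
  omega

lemma descent [Fintype V] :
    ∀ (n : ℕ) (s : V → V → Prop) (θ : V → ℤ) (B : ℤ),
      IsOrientation Y s → (∀ i j, s i j → θ j = θ i + 1) → (∀ v, θ v ≤ B) →
      (∑ v : V, (B - θ v)).toNat ≤ n →
      ∃ (a : Acyc Y) (θ' : V → ℤ),
        (∀ i j, a.1 i j → θ' j = θ' i + 1) ∧ (∀ v w, θ' v - θ' w ≤ 1) ∧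
        ∀ hs : s ∈ Acyc Y, kmk ⟨s, hs⟩ = kmk a := by
  classical
  intro n
  induction n with
  | zero =>
      intro s θ B ho hpot hb hm
      by_cases hflat : ∀ v w, θ v - θ w ≤ 1
      · exact ⟨⟨s, ⟨ho, acyclic_of_potential θ hpot⟩⟩, θ, hpot, hflat, fun _ => rfl⟩
      · exfalso
        push_neg at hflat
        obtain ⟨v, w, hvw⟩ := hflat
        have h2 : (2:ℤ) ≤ B - θ w := by have := hb v; omega
        have hle : B - θ w ≤ ∑ x : V, (B - θ x) := by
          simpa using Finset.single_le_sum (f := fun x => B - θ x)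
            (fun x _ => by (try dsimp only); have := hb x; omega) (Finset.mem_univ w)
        omega
  | succ n ih =>
      intro s θ B ho hpot hb hm
      by_cases hflat : ∀ v w, θ v - θ w ≤ 1
      · exact ⟨⟨s, ⟨ho, acyclic_of_potential θ hpot⟩⟩, θ, hpot, hflat, fun _ => rfl⟩
      · push_neg at hflat
        obtain ⟨v, w, hvw⟩ := hflat
        -- pick a vertex of minimal level: it is a source
        obtain ⟨u, -, hu⟩ := Finset.exists_mem_eq_inf' (⟨v, Finset.mem_univ v⟩ :
          (Finset.univ : Finset V).Nonempty) θ
        have hmin : ∀ x, θ u ≤ θ x := fun x => by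
          rw [← hu]; exact Finset.inf'_le θ (Finset.mem_univ x)
        have husrc : IsSource s u := by
          intro j hj
          have := hpot j u hj
          have := hmin j
          omega
        set θ':= fun x => if x = u then θ u + 2 else θ x with hθ'
        have hpot' : ∀ i j, click s u i j → θ' j = θ' i + 1 := by
          intro i j hij
          unfold click at hij
          by_cases hcond : u = i ∨ u = j
          · rw [if_pos hcond] at hij
            rcases hcond with rfl | rfl
            · exact absurd hij (husrc j)
            · have hne : i ≠ u := (ho.ne hij).symm
              have hpe := hpot u i hij
              rw [hθ']
              dsimp only
              rw [if_pos rfl, if_neg hne]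
              omega
          · rw [if_neg hcond] at hij
            push_neg at hcond
            have hpe := hpot i j hij
            rw [hθ']
            dsimp only
            rw [if_neg (fun hh : j = u => hcond.2 hh.symm),
              if_neg (fun hh : i = u => hcond.1 hh.symm)]
            exact hpe
        have hbound' : ∀ x, θ' x ≤ B := by
          intro x
          rw [hθ']
          dsimp only
          by_cases hx : x = u
          · rw [if_pos hx]
            have h1 := hmin w
            have h2 := hb v
            omega
          · rw [if_neg hx]; exact hb x
        have hsum : ∑ x : V, (B - θ' x) = (∑ x : V, (B - θ x)) - 2 := by
          have hterm : ∀ x ∈ Finset.univ, B - θ' x = (B - θ x) - (if x = u then 2 else 0) := by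
            intro x _
            rw [hθ']
            dsimp only
            by_cases hx : x = u
            · rw [if_pos hx, if_pos hx, hx]; ring
            · rw [if_neg hx, if_neg hx]; ring
          rw [Finset.sum_congr rfl hterm, Finset.sum_sub_distrib,
            Finset.sum_ite_eq' Finset.univ u (fun _ => (2:ℤ)), if_pos (Finset.mem_univ u)]
        have hm' : (∑ x : V, (B - θ' x)).toNat ≤ n := by
          have hge : (2:ℤ) ≤ ∑ x : V, (B - θ x) := by
            have hle : B - θ u ≤ ∑ x : V, (B - θ x) := by
              simpa using Finset.single_le_sum (f := fun x => B - θ x)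
                (fun x _ => by (try dsimp only); have := hb x; omega) (Finset.mem_univ u)
            have h1 := hmin w
            have h2 := hb v
            omega
          omega
        obtain ⟨a, θ'', hpot'', hflat'', heq''⟩ :=
          ih (click s u) θ' B (ho.click u) hpot' hbound' hm'
        refine ⟨a, θ'', hpot'', hflat'', fun hs => ?_⟩
        have hstep : kmk (⟨s, hs⟩ : Acyc Y) =
            kmk ⟨click s u, ⟨ho.click u, acyclic_of_potential θ' hpot'⟩⟩ :=
          Quot.sound ⟨hs, u, husrc, rfl⟩
        exact hstep.trans (heq'' _)

lemma flat_eq_bor [Fintype V] [Nonempty V] {t : V → V → Prop} {θ' : V → ℤ}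
    (ht : IsOrientation Y t) (hpot : ∀ i j, t i j → θ' j = θ' i + 1)
    (hflat : ∀ v w, θ' v - θ' w ≤ 1) :
    ∃ b : V → Bool, Proper Y b ∧ t = bor Y b := by
  classical
  set m := Finset.univ.inf' Finset.univ_nonempty θ' with hm
  have hrange : ∀ v, θ' v = m ∨ θ' v = m + 1 := by
    intro v
    have h1 : m ≤ θ' v := Finset.inf'_le θ' (Finset.mem_univ v)
    obtain ⟨u, -, hu⟩ := Finset.exists_mem_eq_inf' Finset.univ_nonempty θ'
    have h2 := hflat v u
    rw [← hm] at hu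
    omega
  refine ⟨fun v => decide (θ' v = m + 1), ?_, ?_⟩
  · intro i j hadj hbe
    rw [decide_eq_decide] at hbe
    rcases (ht.1 i j).mp hadj with hij | hij
    · have hpe := hpot _ _ hij
      rcases hrange i with h | h
      · have hj : θ' j = m + 1 := by omega
        have := hbe.mpr hj
        omega
      · rcases hrange j with h2 | h2 <;> omega
    · have hpe := hpot _ _ hij
      rcases hrange j with h | h
      · have hi : θ' i = m + 1 := by omega
        have := hbe.mp ((by omega : θ' i = m + 1))
        omega
      · rcases hrange i with h2 | h2 <;> omega
  · funext i j
    apply propext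
    constructor
    · intro htij
      have hadj := ht.adj htij
      have hpe := hpot _ _ htij
      have hi : θ' i = m := by
        rcases hrange i with h | h
        · exact h
        · rcases hrange j with h2 | h2 <;> omega
      have hj : θ' j = m + 1 := by omega
      refine ⟨hadj, ?_, ?_⟩
      · simp [hi]
      · simp [hj]
    · rintro ⟨hadj, hbi, hbj⟩
      have hj : θ' j = m + 1 := of_decide_eq_true hbj
      have hi : ¬ (θ' i = m + 1) := of_decide_eq_false hbi
      rcases (ht.1 i j).mp hadj with hij | hij
      · exact hij
      · exfalso
        have hpe := hpot _ _ hij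
        rcases hrange i with h | h <;> omega

lemma coloring_rigid (hY : Y.Connected) {b c : V → Bool}
    (hb : Proper Y b) (hc : Proper Y c) :
    (∀ v, b v = c v) ∨ (∀ v, b v = !(c v)) := by
  classical
  obtain ⟨u0⟩ := hY.nonempty
  have bstep : ∀ a a' d d' : Bool, a ≠ a' → d ≠ d' → (a == d) = (a' == d') := by decide
  have key : ∀ {x y : V}, Y.Walk x y → (b x == c x) = (b y == c y) := by
    intro x y p
    induction p with
    | nil => rfl
    | @cons a d e hadj p ih =>
        exact (bstep _ _ _ _ (hb _ _ hadj) (hc _ _ hadj)).trans ih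
  by_cases h0 : b u0 = c u0
  · left
    intro v
    have hk := key ((hY.preconnected u0 v).some)
    rw [h0, beq_self_eq_true] at hk
    exact eq_of_beq hk.symm
  · right
    intro v
    have hk := key ((hY.preconnected u0 v).some)
    rw [beq_eq_false_iff_ne.mpr h0] at hk
    have hne : b v ≠ c v := ne_of_beq_false hk.symm
    cases hbv : b v <;> cases hcv : c v
    · exfalso; rw [hbv, hcv] at hne; exact hne rfl
    · decide
    · decide
    · exfalso; rw [hbv, hcv] at hne; exact hne rfl

lemma unique_fixed [Fintype V] (hY : Y.Connected) (hcol : Y.Colorable 2) :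
    Nat.card {x : KQuot Y // sigmaMap Y x = x} = 1 := by
  classical
  haveI : Nonempty V := hY.nonempty
  obtain ⟨C⟩ := hcol
  set c : V → Bool := fun v => decide (C v = 1) with hcdef
  have hfin2 : ∀ x y : Fin 2, x ≠ y → decide (x = 1) ≠ decide (y = 1) := by decide
  have hcp : Proper Y c := fun i j hadj => hfin2 _ _ (C.valid hadj)
  set a0 : Acyc Y := ⟨bor Y c, bor_mem_Acyc hcp⟩ with ha0
  have hfix0 : sigmaMap Y (kmk a0) = kmk a0 := kmk_bor_fixed hcp
  haveI : Unique {x : KQuot Y // sigmaMap Y x = x} := by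
    refine ⟨⟨⟨kmk a0, hfix0⟩⟩, ?_⟩
    rintro ⟨x, hx⟩
    obtain ⟨s', rfl⟩ := Quot.exists_rep x
    have hx' : sigmaMap Y (kmk s') = kmk s' := hx
    have hzero : ∀ (u : V) (p : Y.Walk u u), flow s'.1 p = 0 :=
      fun u p => flow_eq_zero_of_fixed hx' p
    obtain ⟨θ, hpot⟩ := exists_potential hY s'.2 hzero
    set B := Finset.univ.sup' Finset.univ_nonempty θ with hB
    have hb : ∀ v, θ v ≤ B := fun v => Finset.le_sup' θ (Finset.mem_univ v)
    obtain ⟨a, θ', hpot', hflat', heq'⟩ :=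
      descent (∑ v : V, (B - θ v)).toNat s'.1 θ B s'.2.1 hpot hb (le_refl _)
    have hseq : kmk s' = kmk a := heq' s'.2
    obtain ⟨b, hbp, htb⟩ := flat_eq_bor a.2.1 hpot' hflat'
    have hfinal : kmk a = kmk a0 := by
      rcases coloring_rigid hY hbp hcp with hcase | hcase
      · have hbc : b = c := funext hcase
        have : a = a0 := Subtype.ext (by rw [htb, hbc])
        rw [this]
      · have hbc : b = fun v => !(c v) := funext hcase
        have : a = revA a0 := Subtype.ext (by rw [htb, hbc, bor_not]; rfl)
        rw [this]
        exact hfix0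
    exact Subtype.ext (hseq.trans hfinal)
  exact Nat.card_unique

end Descent

/-- for a connected graph Y, δ(Y) = κ(Y)/2 if Y is not bipartite,
δ(Y) = (κ(Y)+1)/2 if Y is bipartite, and in either case δ(Y) = ⌈κ(Y)/2⌉. -/
theorem delta_eq_of_kappa {V : Type*} [Fintype V] (Y : SimpleGraph V)
    (hY : Y.Connected) :
    (¬ Y.Colorable 2 → 2 * delta Y = kappa Y) ∧
    (Y.Colorable 2 → 2 * delta Y = kappa Y + 1) ∧
    delta Y = (kappa Y + 1) / 2 := by
  classical
  haveI hfinK : Finite (KQuot Y) := by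
    haveI : Finite (Acyc Y) := Subtype.finite
    exact inferInstanceAs (Finite (Quot _))
  have hcount := two_mul_card_quot_involution (sigmaMap Y) (sigmaMap_sigmaMap (Y := Y))
  have hδ : delta Y = Nat.card (Quot fun x y : KQuot Y => sigmaMap Y x = y) :=
    Nat.card_congr (dEquiv Y)
  have hκ : kappa Y = Nat.card (KQuot Y) := rfl
  have main : 2 * delta Y = kappa Y + Nat.card {x : KQuot Y // sigmaMap Y x = x} := by
    rw [hδ, hκ]
    exact hcount
  have hnon : ¬ Y.Colorable 2 → 2 * delta Y = kappa Y := by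
    intro hnc
    haveI := no_fixed_of_not_colorable hY hnc
    have hF : Nat.card {x : KQuot Y // sigmaMap Y x = x} = 0 := Nat.card_of_isEmpty
    omega
  have hbip : Y.Colorable 2 → 2 * delta Y = kappa Y + 1 := by
    intro hc2
    have hF : Nat.card {x : KQuot Y // sigmaMap Y x = x} = 1 := unique_fixed hY hc2
    omega
  refine ⟨hnon, hbip, ?_⟩
  by_cases hc2 : Y.Colorable 2
  · have := hbip hc2
    omega
  · have := hnon hc2
    omega

end AcycPaper
end
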